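/- Let R be a transitive well-founded relation on a set A, and let RK denote the ordinal-valued R-rank function (RK(t) = sup{RK(x)+1 : x R t}). Then for all x, y ∈ A: (1) if x R y then RK(x) < RK(y); and (2) if RK(x) < RK(y) then there exists z ∈ A with RK(z) = RK(x) and z R y. -/

import Mathlib

set_option linter.deprecated false in
/-- For a transitive well-founded relation `R` with rank function `RK`:
(1) `x R y` implies `RK x < RK y`; (2) `RK x < RK y` implies there is `z` with
`RK z = RK x` and `z R y`. -/
theorem rank_lt_iff_exists_rel {A : Type*} (R : A → A → Prop)
    (htrans : Transitive R) (hwf : WellFounded R) (x y : A) :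
    (R x y → (hwf.apply x).rank < (hwf.apply y).rank) ∧
      ((hwf.apply x).rank < (hwf.apply y).rank → ∃ z : A, (hwf.apply z).rank = (hwf.apply x).rank ∧ R z y) := by
  refine ⟨fun h => (hwf.apply y).rank_lt_of_rel h, ?_⟩
  induction y using hwf.induction with
  | _ y ih =>
    intro hxy
    rw [(hwf.apply y).rank_eq] at hxy
    obtain ⟨⟨z, hzy⟩, hz⟩ := Ordinal.lt_iSup_iff.mp hxy
    rcases eq_or_lt_of_le (Order.lt_succ_iff.mp hz) with he | hlt
    · exact ⟨z, he.symm, hzy⟩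
    · obtain ⟨z', hz', hz'z⟩ := ih z hzy hlt
      exact ⟨z', hz', htrans hz'z hzy⟩
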